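/- Let ρ ∈ (-1,1), r > 0, and p = (1/π)·[arctan((r-ρ)/√(1-ρ²)) + arctan((r+ρ)/√(1-ρ²))]. If tan(πp) ≠ 0 then r = √((1-ρ²)/tan²(πp) + 1) − √(1-ρ²)/tan(πp). -/

import Mathlib

open Real

/-- Inversion of the predominance probability formula: for `ρ ∈ (-1,1)`,
`r > 0` and `p = (1/π)(arctan((r-ρ)/√(1-ρ²)) + arctan((r+ρ)/√(1-ρ²)))`,
if `tan (π p) ≠ 0` then `r = √((1-ρ²)/tan²(πp) + 1) − √(1-ρ²)/tan(πp)`. -/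
theorem predominance_inversion (ρ r p : ℝ) (hρ : ρ ∈ Set.Ioo (-1 : ℝ) 1) (hr : 0 < r)
    (hp : p = (1 / Real.pi) *
        (Real.arctan ((r - ρ) / Real.sqrt (1 - ρ ^ 2)) +
          Real.arctan ((r + ρ) / Real.sqrt (1 - ρ ^ 2))))
    (htan : Real.tan (Real.pi * p) ≠ 0) :
    r = Real.sqrt ((1 - ρ ^ 2) / Real.tan (Real.pi * p) ^ 2 + 1) -
        Real.sqrt (1 - ρ ^ 2) / Real.tan (Real.pi * p) := by
  obtain ⟨hρ1, hρ2⟩ := hρ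
  have h1 : (0:ℝ) < 1 - ρ ^ 2 := by nlinarith
  set s : ℝ := Real.sqrt (1 - ρ ^ 2) with hs_def
  have hs : 0 < s := Real.sqrt_pos.mpr h1
  have hs2 : s ^ 2 = 1 - ρ ^ 2 := Real.sq_sqrt h1.le
  set a : ℝ := (r - ρ) / s
  set b : ℝ := (r + ρ) / s
  have hpi : Real.pi * p = Real.arctan a + Real.arctan b := by
    rw [hp]; field_simp
  have hss : s * s = 1 - ρ ^ 2 := by nlinarith [hs2]
  have hab : a * b = (r ^ 2 - ρ ^ 2) / (1 - ρ ^ 2) := by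
    show (r - ρ) / s * ((r + ρ) / s) = _
    rw [div_mul_div_comm, hss]
    congr 1
    ring
  -- rule out r = 1
  have hr1 : r ≠ 1 := by
    intro hr1
    have hab1 : a * b = 1 := by rw [hab, hr1]; field_simp
    have ha : 0 < a := by
      apply div_pos _ hs; rw [hr1]; linarith
    have hbinv : b = a⁻¹ := by
      field_simp
      rw [mul_comm] at hab1
      exact hab1
    have : Real.arctan a + Real.arctan b = Real.pi / 2 := by
      rw [hbinv, Real.arctan_inv_of_pos ha]; ring
    rw [hpi, this, Real.tan_pi_div_two] at htan
    exact htan rfl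
  -- tan(πp) = (a+b)/(1-ab)
  have hsum : a + b = 2 * r / s := by
    show (r - ρ) / s + (r + ρ) / s = _
    rw [← add_div]
    congr 1
    ring
  have ht : Real.tan (Real.pi * p) = (a + b) / (1 - a * b) := by
    rcases lt_trichotomy (a * b) 1 with h | h | h
    · rw [hpi, Real.arctan_add h, Real.tan_arctan]
    · exfalso
      rw [hab, div_eq_one_iff_eq h1.ne'] at h
      have : r ^ 2 = 1 := by linarith
      have : r = 1 := by nlinarith
      exact hr1 this
    · have hr' : 1 < r := by
        by_contra hle
        push_neg at hle
        rw [hab, lt_div_iff₀ h1] at h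
        nlinarith
      have ha : 0 < a := div_pos (by linarith) hs
      rw [hpi, Real.arctan_add_eq_add_pi h ha, Real.tan_add_pi, Real.tan_arctan]
  have hrr : 1 - r ^ 2 ≠ 0 := by
    intro h; apply hr1; nlinarith
  have h1ab : 1 - a * b = (1 - r ^ 2) / s ^ 2 := by
    rw [hab, ← hs2]
    field_simp
    linarith [hs2]
  have htv : Real.tan (Real.pi * p) = 2 * r * s / (1 - r ^ 2) := by
    rw [ht, hsum, h1ab]
    field_simp
  set t : ℝ := Real.tan (Real.pi * p)
  have ht0 : t ≠ 0 := htan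
  have key : (1 - ρ ^ 2) / t ^ 2 + 1 = ((1 + r ^ 2) / (2 * r)) ^ 2 := by
    rw [← hs2, htv]
    field_simp
    ring
  have key2 : s / t = (1 - r ^ 2) / (2 * r) := by
    rw [htv]
    field_simp
  rw [key, key2, Real.sqrt_sq (by positivity)]
  field_simp
  ring
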